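/- For integers n ≥ 1 and k ≥ 0 let γ_{n,k} ∈ ℚ be the coefficient of t^k in the formal power series ((e^t − 1)/t)^{n−1} ∈ ℚ⟦t⟧. Then for every fixed k ≥ 0, lim_{n→∞} γ_{n,k} / n^k = 1/(2^k · k!). -/

import Mathlib

open Filter

open Finset

/-- The formal power series `(e^t − 1)/t = Σ_{j≥0} t^j/(j+1)! ∈ ℚ⟦t⟧`. -/
noncomputable def expm1DivT : PowerSeries ℚ :=
  PowerSeries.mk fun j => ((j + 1).factorial : ℚ)⁻¹

noncomputable def gAux : PowerSeries ℚ := PowerSeries.mk fun j => ((j + 2).factorial : ℚ)⁻¹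

lemma expm1_eq : expm1DivT = 1 + PowerSeries.X * gAux := by
  ext j
  cases j with
  | zero => simp [expm1DivT, gAux]
  | succ j => simp [expm1DivT, gAux, PowerSeries.coeff_succ_X_mul,
      PowerSeries.coeff_one]

lemma coeff_formula (k m : ℕ) :
    PowerSeries.coeff (R := ℚ) k (expm1DivT ^ m) =
      ∑ i ∈ range (k + 1), (m.choose i : ℚ) * PowerSeries.coeff (R := ℚ) (k - i) (gAux ^ i) := by
  have h1 : expm1DivT ^ m = ∑ i ∈ range (m + 1),
      (PowerSeries.X * gAux) ^ i * (PowerSeries.C (R := ℚ) (m.choose i : ℚ)) := by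
    rw [expm1_eq, add_comm, add_pow]
    simp
  rw [h1, map_sum]
  have key : ∀ i : ℕ, PowerSeries.coeff (R := ℚ) k ((PowerSeries.X * gAux) ^ i * (PowerSeries.C (R := ℚ) (m.choose i : ℚ)))
      = (m.choose i : ℚ) * (if i ≤ k then PowerSeries.coeff (R := ℚ) (k - i) (gAux ^ i) else 0) := by
    intro i
    rw [mul_comm, PowerSeries.coeff_C_mul, mul_pow, PowerSeries.coeff_X_pow_mul']
  calc (∑ i ∈ range (m + 1),
      PowerSeries.coeff (R := ℚ) k ((PowerSeries.X * gAux) ^ i * (PowerSeries.C (R := ℚ) (m.choose i : ℚ))))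
      = ∑ i ∈ range (m + 1), (m.choose i : ℚ) *
        (if i ≤ k then PowerSeries.coeff (R := ℚ) (k - i) (gAux ^ i) else 0) := by
        exact Finset.sum_congr rfl fun i _ => key i
    _ = ∑ i ∈ range (max m k + 1), (m.choose i : ℚ) *
        (if i ≤ k then PowerSeries.coeff (R := ℚ) (k - i) (gAux ^ i) else 0) := by
        refine (Finset.sum_subset (Finset.range_subset_range.mpr (Nat.succ_le_succ (le_max_left m k))) ?_)
        intro i _ hi
        simp only [mem_range] at hi
        rw [Nat.choose_eq_zero_of_lt (by omega)]
        simp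
    _ = ∑ i ∈ range (k + 1), (m.choose i : ℚ) *
        (if i ≤ k then PowerSeries.coeff (R := ℚ) (k - i) (gAux ^ i) else 0) := by
        refine (Finset.sum_subset (Finset.range_subset_range.mpr (Nat.succ_le_succ (le_max_right m k))) ?_).symm
        intro i _ hi
        simp only [mem_range] at hi
        rw [if_neg (by omega)]
        simp
    _ = _ := by
        refine Finset.sum_congr rfl fun i hi => ?_
        rw [if_pos (by simp at hi; omega)]

lemma descFact_tendsto (i : ℕ) :
    Tendsto (fun n : ℕ => ((n - 1).descFactorial i : ℝ) / (n : ℝ) ^ i) atTop (nhds 1) := by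
  have h : ∀ᶠ n : ℕ in atTop, ((n - 1).descFactorial i : ℝ) / (n : ℝ) ^ i
      = ∏ j ∈ range i, (1 - (1 + (j : ℝ)) / n) := by
    filter_upwards [eventually_ge_atTop (i + 1)] with n hn
    have hn0 : (n : ℝ) ≠ 0 := Nat.cast_ne_zero.mpr (by omega)
    rw [Nat.descFactorial_eq_prod_range, Nat.cast_prod]
    have hpow : (n : ℝ) ^ i = ∏ _j ∈ range i, (n : ℝ) := by simp
    rw [hpow, ← Finset.prod_div_distrib]
    refine Finset.prod_congr rfl fun j hj => ?_
    have hj' : j < i := mem_range.mp hj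
    have hcast : ((n - 1 - j : ℕ) : ℝ) = (n : ℝ) - (1 + j) := by
      have h2 : n - 1 - j = n - (1 + j) := by omega
      rw [h2, Nat.cast_sub (by omega)]
      push_cast; ring
    rw [hcast, sub_div, div_self hn0]
  rw [tendsto_congr' h]
  have hlim : Tendsto (fun n : ℕ => ∏ j ∈ range i, (1 - (1 + (j : ℝ)) / n)) atTop
      (nhds (∏ _j ∈ range i, (1 : ℝ))) := by
    refine tendsto_finset_prod _ fun j _ => ?_
    have := (tendsto_const_nhds : Tendsto (fun _ : ℕ => (1:ℝ)) atTop (nhds 1)).sub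
      (((tendsto_const_nhds : Tendsto (fun _ : ℕ => (1 + (j:ℝ))) atTop (nhds (1 + (j:ℝ))))).div_atTop
        tendsto_natCast_atTop_atTop)
    simpa using this
  simpa using hlim

lemma choose_div_tendsto (k i : ℕ) (hik : i ≤ k) :
    Tendsto (fun n : ℕ => ((n - 1).choose i : ℝ) / (n : ℝ) ^ k) atTop
      (nhds ((i.factorial : ℝ)⁻¹ * (if i = k then 1 else 0))) := by
  have h : ∀ᶠ n : ℕ in atTop, ((n - 1).choose i : ℝ) / (n : ℝ) ^ k
      = ((n - 1).descFactorial i : ℝ) / (n : ℝ) ^ i *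
        ((i.factorial : ℝ)⁻¹ * (1 / (n : ℝ)) ^ (k - i)) := by
    filter_upwards [eventually_ge_atTop 1] with n hn
    have hn0 : (n : ℝ) ≠ 0 := Nat.cast_ne_zero.mpr (by omega)
    have hd : ((n - 1).descFactorial i : ℝ) = (i.factorial : ℝ) * ((n - 1).choose i : ℝ) := by
      rw [← Nat.cast_mul, ← Nat.descFactorial_eq_factorial_mul_choose]
    have hnk : (n : ℝ) ^ k = (n : ℝ) ^ i * (n : ℝ) ^ (k - i) := by
      rw [← pow_add]; congr 1; omega
    rw [hd, hnk]
    have hfac : (i.factorial : ℝ) ≠ 0 := Nat.cast_ne_zero.mpr i.factorial_ne_zero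
    field_simp
    rw [mul_assoc, ← mul_pow, mul_one_div_cancel hn0, one_pow, mul_one]
  rw [tendsto_congr' h]
  have hpowlim : Tendsto (fun n : ℕ => (1 / (n : ℝ)) ^ (k - i)) atTop
      (nhds (if i = k then 1 else 0)) := by
    rcases eq_or_lt_of_le hik with rfl | hlt
    · simp
    · rw [if_neg (by omega)]
      have h0 : Tendsto (fun n : ℕ => 1 / (n : ℝ)) atTop (nhds 0) :=
        tendsto_one_div_atTop_nhds_zero_nat
      have := h0.pow (k - i)
      rwa [zero_pow (by omega)] at this
  have := (descFact_tendsto i).mul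
    ((tendsto_const_nhds : Tendsto (fun _ : ℕ => ((i.factorial : ℝ))⁻¹) atTop
      (nhds ((i.factorial : ℝ))⁻¹)).mul hpowlim)
  simpa using this

/-- Let `γ_{n,k}` be the coefficient of `t^k` in `((e^t − 1)/t)^{n−1} ∈ ℚ⟦t⟧`.
Then for every fixed `k`, `lim_{n→∞} γ_{n,k}/n^k = 1/(2^k·k!)`. -/
theorem gamma_coeff_limit (k : ℕ) :
    Tendsto (fun n : ℕ =>
        ((PowerSeries.coeff (R := ℚ) k (expm1DivT ^ (n - 1)) : ℚ) : ℝ) / (n : ℝ) ^ k)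
      atTop
      (nhds (1 / ((2 : ℝ) ^ k * (k.factorial : ℝ)))) := by
  have hco : ∀ n : ℕ, ((PowerSeries.coeff (R := ℚ) k (expm1DivT ^ (n - 1)) : ℚ) : ℝ) / (n : ℝ) ^ k
      = ∑ i ∈ range (k + 1), ((n - 1).choose i : ℝ) / (n : ℝ) ^ k *
        ((PowerSeries.coeff (R := ℚ) (k - i) (gAux ^ i) : ℚ) : ℝ) := by
    intro n
    rw [coeff_formula]
    push_cast
    rw [Finset.sum_div]
    refine Finset.sum_congr rfl fun i _ => ?_
    ring
  simp only [hco]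
  have hlim : Tendsto (fun n : ℕ => ∑ i ∈ range (k + 1), ((n - 1).choose i : ℝ) / (n : ℝ) ^ k *
      ((PowerSeries.coeff (R := ℚ) (k - i) (gAux ^ i) : ℚ) : ℝ)) atTop
      (nhds (∑ i ∈ range (k + 1), (i.factorial : ℝ)⁻¹ * (if i = k then 1 else 0) *
        ((PowerSeries.coeff (R := ℚ) (k - i) (gAux ^ i) : ℚ) : ℝ))) := by
    refine tendsto_finset_sum _ fun i hi => ?_
    exact (choose_div_tendsto k i (by simp only [mem_range] at hi; omega)).mul tendsto_const_nhds
  have hck : ((PowerSeries.coeff (R := ℚ) (k - k) (gAux ^ k) : ℚ) : ℝ) = (2 : ℝ)⁻¹ ^ k := by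
    rw [Nat.sub_self, PowerSeries.coeff_zero_eq_constantCoeff_apply, map_pow]
    have hc : PowerSeries.constantCoeff (R := ℚ) gAux = (2 : ℚ)⁻¹ := by
      rw [← PowerSeries.coeff_zero_eq_constantCoeff_apply]
      simp [gAux]
    rw [hc]
    push_cast
    norm_num
  have hsum : (∑ i ∈ range (k + 1), (i.factorial : ℝ)⁻¹ * (if i = k then 1 else 0) *
      ((PowerSeries.coeff (R := ℚ) (k - i) (gAux ^ i) : ℚ) : ℝ))
      = 1 / ((2 : ℝ) ^ k * (k.factorial : ℝ)) := by
    rw [Finset.sum_eq_single_of_mem k (self_mem_range_succ k)]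
    · rw [if_pos rfl, mul_one, hck]
      rw [one_div, mul_inv, inv_pow]
      ring
    · intro i _ hik
      rw [if_neg hik]
      ring
  rw [← hsum]
  exact hlim
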